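/- Let K_S and K_R be symmetric real matrices of sizes n_S×n_S and n_R×n_R, let B_S be a fixed real m×n_S matrix, and let j_e ∈ ℝ^{n_S}, j_M ∈ ℝ^{n_R} be fixed vectors. Suppose B_R : ℝ → (m×n_R real matrices) and a_S : ℝ → ℝ^{n_S}, a_R : ℝ → ℝ^{n_R}, λ : ℝ → ℝ^m are differentiable functions of the parameter α satisfying, for every α: K_S a_S(α) + B_Sᵀ λ(α) = j_e, K_R a_R(α) − B_R(α)ᵀ λ(α) = j_M, and B_S a_S(α) − B_R(α) a_R(α) = 0. Define the energy E(α) = ½ a_S(α)ᵀ K_S a_S(α) + ½ a_R(α)ᵀ K_R a_R(α) − j_Mᵀ a_R(α) and the torque T(α) = λ(α)ᵀ B_R'(α) a_R(α), where B_R'(α) is the entrywise derivative of B_R at α. Then for every α, E'(α) = j_eᵀ a_S'(α) − T(α). -/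

import Mathlib

open Matrix

private lemma hasDerivAt_dot' {n : ℕ} {u v : ℝ → Fin n → ℝ} {u' v' : Fin n → ℝ} {α : ℝ}
    (hu : ∀ i, HasDerivAt (fun β => u β i) (u' i) α)
    (hv : ∀ i, HasDerivAt (fun β => v β i) (v' i) α) :
    HasDerivAt (fun β => u β ⬝ᵥ v β) (u' ⬝ᵥ v α + u α ⬝ᵥ v') α := by
  have h : (u' ⬝ᵥ v α + u α ⬝ᵥ v')
      = ∑ i : Fin n, (u' i * v α i + u α i * v' i) := by
    simp [dotProduct, Finset.sum_add_distrib]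
  rw [h]
  exact HasDerivAt.fun_sum fun i _ => (hu i).mul (hv i)

private lemma hasDerivAt_mulVec' {m n : ℕ} {M : ℝ → Matrix (Fin m) (Fin n) ℝ}
    {M' : Matrix (Fin m) (Fin n) ℝ} {u : ℝ → Fin n → ℝ} {u' : Fin n → ℝ} {α : ℝ}
    (hM : ∀ i j, HasDerivAt (fun β => M β i j) (M' i j) α)
    (hu : ∀ j, HasDerivAt (fun β => u β j) (u' j) α) :
    ∀ i, HasDerivAt (fun β => (M β *ᵥ u β) i) ((M' *ᵥ u α + M α *ᵥ u') i) α := by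
  intro i
  have := hasDerivAt_dot' (u := fun β => M β i) (v := u) (u' := M' i) (v' := u')
    (fun j => hM i j) hu
  simpa [mulVec] using this



open Matrix

/-- Algebraic discrete energy balance (Lemma 2 of the paper): for differentiable
solutions of the parameter-dependent saddle-point system of the harmonic mortar
discretization, the derivative of the energy `E(α)` with respect to the rotation
angle equals the electric work `j_eᵀ a_S'(α)` minus the torque
`T(α) = λ(α)ᵀ B_R'(α) a_R(α)`. -/
theorem discrete_energy_balance
    (nS nR m : ℕ)
    (K_S : Matrix (Fin nS) (Fin nS) ℝ) (K_R : Matrix (Fin nR) (Fin nR) ℝ)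
    (hKS_sym : K_S.IsSymm) (hKR_sym : K_R.IsSymm)
    (B_S : Matrix (Fin m) (Fin nS) ℝ)
    (j_e : Fin nS → ℝ) (j_M : Fin nR → ℝ)
    (B_R B_R' : ℝ → Matrix (Fin m) (Fin nR) ℝ)
    (aS aS' : ℝ → Fin nS → ℝ) (aR aR' : ℝ → Fin nR → ℝ)
    (lam lam' : ℝ → Fin m → ℝ)
    (hBR : ∀ (i : Fin m) (j : Fin nR) (α : ℝ),
      HasDerivAt (fun β => B_R β i j) (B_R' α i j) α)
    (haS : ∀ α : ℝ, HasDerivAt aS (aS' α) α)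
    (haR : ∀ α : ℝ, HasDerivAt aR (aR' α) α)
    (hlam : ∀ α : ℝ, HasDerivAt lam (lam' α) α)
    (heq1 : ∀ α : ℝ, K_S *ᵥ aS α + B_Sᵀ *ᵥ lam α = j_e)
    (heq2 : ∀ α : ℝ, K_R *ᵥ aR α - (B_R α)ᵀ *ᵥ lam α = j_M)
    (heq3 : ∀ α : ℝ, B_S *ᵥ aS α - B_R α *ᵥ aR α = 0)
    (E T : ℝ → ℝ)
    (hE : ∀ α : ℝ, E α = (1/2) * (aS α ⬝ᵥ (K_S *ᵥ aS α))
      + (1/2) * (aR α ⬝ᵥ (K_R *ᵥ aR α)) - j_M ⬝ᵥ aR α)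
    (hT : ∀ α : ℝ, T α = lam α ⬝ᵥ (B_R' α *ᵥ aR α)) :
    ∀ α : ℝ, HasDerivAt E (j_e ⬝ᵥ aS' α - T α) α := by
  intro α
  -- componentwise derivatives
  have haSc := hasDerivAt_pi.1 (haS α)
  have haRc := hasDerivAt_pi.1 (haR α)
  have hlamc := hasDerivAt_pi.1 (hlam α)
  have hKSc : ∀ i, HasDerivAt (fun β => (K_S *ᵥ aS β) i) ((K_S *ᵥ aS' α) i) α := by
    intro i
    have := hasDerivAt_mulVec' (M := fun _ => K_S) (M' := 0) (u := aS) (u' := aS' α)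
      (fun i j => hasDerivAt_const α (K_S i j)) haSc i
    simpa using this
  have hKRc : ∀ i, HasDerivAt (fun β => (K_R *ᵥ aR β) i) ((K_R *ᵥ aR' α) i) α := by
    intro i
    have := hasDerivAt_mulVec' (M := fun _ => K_R) (M' := 0) (u := aR) (u' := aR' α)
      (fun i j => hasDerivAt_const α (K_R i j)) haRc i
    simpa using this
  -- differentiate the coupling condition heq3
  have hcouple : B_S *ᵥ aS' α = B_R' α *ᵥ aR α + B_R α *ᵥ aR' α := by
    funext i
    have hf : HasDerivAt (fun β => (B_S *ᵥ aS β) i) ((B_S *ᵥ aS' α) i) α := by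
      have := hasDerivAt_mulVec' (M := fun _ => B_S) (M' := 0) (u := aS) (u' := aS' α)
        (fun i j => hasDerivAt_const α (B_S i j)) haSc i
      simpa using this
    have hg : HasDerivAt (fun β => (B_R β *ᵥ aR β) i)
        ((B_R' α *ᵥ aR α + B_R α *ᵥ aR' α) i) α :=
      hasDerivAt_mulVec' (fun i j => hBR i j α) haRc i
    have hfg : (fun β => (B_S *ᵥ aS β) i) = fun β => (B_R β *ᵥ aR β) i := by
      funext β
      have := heq3 β
      have := congrFun this i
      simpa [sub_eq_zero] using this
    rw [hfg] at hf
    exact hf.unique hg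
  -- derivative of the energy
  have hEfun : E = fun β => (1/2) * (aS β ⬝ᵥ (K_S *ᵥ aS β))
      + (1/2) * (aR β ⬝ᵥ (K_R *ᵥ aR β)) - j_M ⬝ᵥ aR β := funext hE
  have h1 : HasDerivAt (fun β => aS β ⬝ᵥ (K_S *ᵥ aS β))
      (aS' α ⬝ᵥ (K_S *ᵥ aS α) + aS α ⬝ᵥ (K_S *ᵥ aS' α)) α :=
    hasDerivAt_dot' haSc hKSc
  have h2 : HasDerivAt (fun β => aR β ⬝ᵥ (K_R *ᵥ aR β))
      (aR' α ⬝ᵥ (K_R *ᵥ aR α) + aR α ⬝ᵥ (K_R *ᵥ aR' α)) α :=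
    hasDerivAt_dot' haRc hKRc
  have h3 : HasDerivAt (fun β => j_M ⬝ᵥ aR β) (j_M ⬝ᵥ aR' α) α := by
    have := hasDerivAt_dot' (u := fun _ => j_M) (u' := 0) (v := aR) (v' := aR' α)
      (fun i => hasDerivAt_const α (j_M i)) haRc
    simpa using this
  have hD : HasDerivAt E
      ((1/2) * (aS' α ⬝ᵥ (K_S *ᵥ aS α) + aS α ⬝ᵥ (K_S *ᵥ aS' α))
        + (1/2) * (aR' α ⬝ᵥ (K_R *ᵥ aR α) + aR α ⬝ᵥ (K_R *ᵥ aR' α))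
        - j_M ⬝ᵥ aR' α) α := by
    rw [hEfun]
    exact ((h1.const_mul (1/2 : ℝ)).add (h2.const_mul (1/2 : ℝ))).sub h3
  -- symmetry identities
  have hsymS : aS α ⬝ᵥ (K_S *ᵥ aS' α) = aS' α ⬝ᵥ (K_S *ᵥ aS α) := by
    rw [dotProduct_mulVec, ← mulVec_transpose, hKS_sym.eq, dotProduct_comm]
  have hsymR : aR α ⬝ᵥ (K_R *ᵥ aR' α) = aR' α ⬝ᵥ (K_R *ᵥ aR α) := by
    rw [dotProduct_mulVec, ← mulVec_transpose, hKR_sym.eq, dotProduct_comm]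
  -- use the system equations
  have e1 : K_S *ᵥ aS α = j_e - B_Sᵀ *ᵥ lam α := by
    have := heq1 α; linear_combination (norm := abel) this
  have e2 : K_R *ᵥ aR α = j_M + (B_R α)ᵀ *ᵥ lam α := by
    have := heq2 α; linear_combination (norm := abel) this
  have key : (1/2) * (aS' α ⬝ᵥ (K_S *ᵥ aS α) + aS α ⬝ᵥ (K_S *ᵥ aS' α))
        + (1/2) * (aR' α ⬝ᵥ (K_R *ᵥ aR α) + aR α ⬝ᵥ (K_R *ᵥ aR' α))
        - j_M ⬝ᵥ aR' α = j_e ⬝ᵥ aS' α - T α := by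
    rw [hsymS, hsymR, e1, e2, hT]
    have t1 : aS' α ⬝ᵥ (j_e - B_Sᵀ *ᵥ lam α)
        = j_e ⬝ᵥ aS' α - (B_S *ᵥ aS' α) ⬝ᵥ lam α := by
      rw [dotProduct_sub, dotProduct_comm, dotProduct_mulVec, vecMul_transpose]
    have t2 : aR' α ⬝ᵥ (j_M + (B_R α)ᵀ *ᵥ lam α)
        = j_M ⬝ᵥ aR' α + (B_R α *ᵥ aR' α) ⬝ᵥ lam α := by
      rw [dotProduct_add, dotProduct_comm, dotProduct_mulVec, vecMul_transpose]
    rw [t1, t2, hcouple, add_dotProduct]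
    have : lam α ⬝ᵥ (B_R' α *ᵥ aR α) = (B_R' α *ᵥ aR α) ⬝ᵥ lam α := dotProduct_comm _ _
    rw [this]; ring
  rwa [key] at hD
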